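/- Let ({H_a : a ∈ A}, H) be a strict team, and fix a nonempty B ⊆ A and nonempty X_b ⊆ H_b for each b ∈ B. Then for each index ã in the induced index set à (consisting of A\B together with the connected components of the 𝐇_b minus X_b), the carrier H_ã is connected in 𝐇. -/

import Mathlib

/-! Basic hypergraph notions (following Došen–Petrić / Curien–Obradović–Ivanović). -/

variable {α : Type*}

/-- `ConnIn E X`: the restriction of the edge set `E` to `X` is connected, i.e. every
nontrivial partition of `X` is crossed by an edge of `E` lying inside `X`. -/
def ConnIn (E : Set (Set α)) (X : Set α) : Prop :=
  ∀ X₁ X₂ : Set α, X₁ ∪ X₂ = X → Disjoint X₁ X₂ → X₁.Nonempty → X₂.Nonempty →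
    ∃ e ∈ E, e ⊆ X ∧ ¬ e ⊆ X₁ ∧ ¬ e ⊆ X₂

/-- An atomic hypergraph: a carrier set together with a set of nonempty hyperedges covering
the carrier and containing all singletons. -/
structure AtomicHypergraph (α : Type*) where
  carrier : Set α
  edges : Set (Set α)
  edges_nonempty : ∀ e ∈ edges, e.Nonempty
  edges_sub : ∀ e ∈ edges, e ⊆ carrier
  atomic : ∀ x ∈ carrier, {x} ∈ edges

/-- A subset `X` is connected in the hypergraph `G`. -/
def AtomicHypergraph.ConnectedIn (G : AtomicHypergraph α) (X : Set α) : Prop := ConnIn G.edges X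

/-- The hypergraph `G` is connected. -/
def AtomicHypergraph.Connected (G : AtomicHypergraph α) : Prop := G.ConnectedIn G.carrier

/-- Restriction of a hypergraph to a subset. -/
def AtomicHypergraph.restrict (G : AtomicHypergraph α) (X : Set α) : AtomicHypergraph α where
  carrier := G.carrier ∩ X
  edges := {e | e ∈ G.edges ∧ e ⊆ X}
  edges_nonempty := fun e he => G.edges_nonempty e he.1
  edges_sub := fun e he => Set.subset_inter (G.edges_sub e he.1) he.2
  atomic := fun x hx => ⟨G.atomic x hx.1, Set.singleton_subset_iff.2 hx.2⟩

/-- `Y` is a connected component of the hypergraph `G`: a maximal nonempty connected subset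
of the carrier. -/
def IsCC (G : AtomicHypergraph α) (Y : Set α) : Prop :=
  Y.Nonempty ∧ Y ⊆ G.carrier ∧ G.ConnectedIn Y ∧
    ∀ Z, Y ⊆ Z → Z ⊆ G.carrier → G.ConnectedIn Z → Z = Y

/-- A preteam: a finite family of pairwise disjoint connected participating hypergraphs
whose carriers partition the carrier of a connected coordinating hypergraph. -/
structure Preteam (α : Type*) (A : Type*) where
  part : A → AtomicHypergraph α
  coord : AtomicHypergraph α
  finite : coord.carrier.Finite
  part_connected : ∀ a, (part a).Connected
  coord_connected : coord.Connected
  part_nonempty : ∀ a, (part a).carrier.Nonempty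
  disj : Pairwise fun a b => Disjoint (part a).carrier (part b).carrier
  union : (⋃ a, (part a).carrier) = coord.carrier

/-- The coordinating hypergraph with the roots `⋃_{b ∈ B} X b` removed. -/
def Preteam.removed {α A : Type*} (τ : Preteam α A) (B : Set A) (X : A → Set α) :
    AtomicHypergraph α :=
  τ.coord.restrict (τ.coord.carrier \ ⋃ b ∈ B, X b)

/-- A preteam is a strict team if, for each nonempty `B ⊆ A` and nonempty `X b ⊆ H_b`
(`b ∈ B`), the carrier of each participating hypergraph with `a ∉ B`, and each connected
component of `H_b` minus `X b` (`b ∈ B`), is included in a single connected component of the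
coordinating hypergraph minus `⋃_{b ∈ B} X b`. -/
def Preteam.IsStrictTeam {α A : Type*} (τ : Preteam α A) : Prop :=
  ∀ (B : Set A) (X : A → Set α), B.Nonempty →
    (∀ b ∈ B, (X b).Nonempty ∧ X b ⊆ (τ.part b).carrier) →
    (∀ a ∉ B, ∃ Y, IsCC (τ.removed B X) Y ∧ (τ.part a).carrier ⊆ Y) ∧
    (∀ b ∈ B, ∀ C, IsCC ((τ.part b).restrict ((τ.part b).carrier \ X b)) C →
      ∃ Y, IsCC (τ.removed B X) Y ∧ C ⊆ Y)

lemma connIn_mono {E E' : Set (Set α)} (h : E ⊆ E') {X : Set α} (hc : ConnIn E X) :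
    ConnIn E' X := fun X₁ X₂ hu hd h1 h2 => by
  obtain ⟨e, he, h3⟩ := hc X₁ X₂ hu hd h1 h2
  exact ⟨e, h he, h3⟩

lemma removed_carrier {α A : Type*} (τ : Preteam α A) (B : Set A) (X : A → Set α) :
    (τ.removed B X).carrier = τ.coord.carrier \ ⋃ b ∈ B, X b := by
  simp [Preteam.removed, AtomicHypergraph.restrict, Set.inter_eq_self_of_subset_left,
    Set.diff_subset]

lemma removed_conn {α A : Type*} (τ : Preteam α A) (B : Set A) (X : A → Set α)
    {Y : Set α} (h : (τ.removed B X).ConnectedIn Y) : τ.coord.ConnectedIn Y :=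
  connIn_mono (fun e he => he.1) h

/-- For a strict team and any choice of nonempty `B ⊆ A` and nonempty roots `X b ⊆ H_b`,
each carrier `H_ã` of the induced index set `Ã` (the carriers `H_a` for `a ∉ B`, together
with the connected components of `H_b` minus `X b` for `b ∈ B`) is connected in the
coordinating hypergraph. -/
theorem stmt7 {α A : Type*} (τ : Preteam α A) (hτ : τ.IsStrictTeam)
    (B : Set A) (hB : B.Nonempty) (X : A → Set α)
    (hX : ∀ b ∈ B, (X b).Nonempty ∧ X b ⊆ (τ.part b).carrier) :
    (∀ a ∉ B, τ.coord.ConnectedIn (τ.part a).carrier) ∧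
    (∀ b ∈ B, ∀ C, IsCC ((τ.part b).restrict ((τ.part b).carrier \ X b)) C →
      τ.coord.ConnectedIn C) := by

  constructor
  · intro a ha
    obtain ⟨b, hb⟩ := hB
    have hab : a ≠ b := fun h => ha (h ▸ hb)
    set B' : Set A := {a}ᶜ with hB'
    set X' : A → Set α := fun c => (τ.part c).carrier with hX'
    have hB'ne : B'.Nonempty := ⟨b, fun h => hab (Set.mem_singleton_iff.1 h).symm⟩
    have hX'ok : ∀ c ∈ B', (X' c).Nonempty ∧ X' c ⊆ (τ.part c).carrier :=
      fun c _ => ⟨τ.part_nonempty c, le_refl _⟩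
    obtain ⟨h1, _⟩ := hτ B' X' hB'ne hX'ok
    obtain ⟨Y, hY, hsub⟩ := h1 a (by simp [hB'])
    have hcar : (τ.removed B' X').carrier = (τ.part a).carrier := by
      rw [removed_carrier]
      ext x
      simp only [Set.mem_diff, Set.mem_iUnion, hB', hX', Set.mem_compl_iff,
        Set.mem_singleton_iff, ← τ.union]
      constructor
      · rintro ⟨⟨c, hc⟩, hn⟩
        by_cases h : c = a
        · exact h ▸ hc
        · exact absurd ⟨c, h, hc⟩ hn
      · intro hx
        refine ⟨⟨a, hx⟩, ?_⟩
        rintro ⟨c, hca, hc⟩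
        exact (τ.disj (Ne.symm hca)).ne_of_mem hx hc rfl
    have hYeq : Y = (τ.part a).carrier :=
      Set.Subset.antisymm (hcar ▸ hY.2.1) hsub
    exact hYeq ▸ removed_conn τ B' X' hY.2.2.1
  · intro b hb C hC
    have hCne : C.Nonempty := hC.1
    have hCsub : C ⊆ (τ.part b).carrier ∩ ((τ.part b).carrier \ X b) := hC.2.1
    have hCcb : C ⊆ (τ.part b).carrier := fun x hx => (hCsub hx).1
    have hCX : Disjoint C (X b) :=
      Set.disjoint_left.2 fun x hx => (hCsub hx).2.2
    set B' : Set A := Set.univ with hB'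
    classical
    set X' : A → Set α :=
      fun c => if c = b then (τ.part b).carrier \ C else (τ.part c).carrier with hX'
    have hXb : X' b = (τ.part b).carrier \ C := if_pos rfl
    have hXc : ∀ c, c ≠ b → X' c = (τ.part c).carrier := fun c hc => if_neg hc
    have hX'ok : ∀ c ∈ B', (X' c).Nonempty ∧ X' c ⊆ (τ.part c).carrier := by
      intro c _
      by_cases h : c = b
      · rw [h, hXb]
        obtain ⟨hXbne, hXbsub⟩ := hX b hb
        refine ⟨?_, Set.diff_subset⟩
        obtain ⟨x, hx⟩ := hXbne
        exact ⟨x, hXbsub hx, fun hxc => (hCX.ne_of_mem hxc hx) rfl⟩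
      · rw [hXc c h]
        exact ⟨τ.part_nonempty c, le_refl _⟩
    obtain ⟨_, h2⟩ := hτ B' X' ⟨b, trivial⟩ hX'ok
    have hdiffeq : (τ.part b).carrier \ X' b = C := by
      rw [hXb, Set.diff_diff_right, Set.diff_self, Set.empty_union,
        Set.inter_eq_self_of_subset_right hCcb]
    have hCC' : IsCC ((τ.part b).restrict ((τ.part b).carrier \ X' b)) C := by
      rw [hdiffeq]
      refine ⟨hCne, fun x hx => ⟨hCcb hx, hx⟩, ?_, ?_⟩
      · intro X₁ X₂ hu hd h1 h2
        obtain ⟨e, he, hes, h3, h4⟩ := hC.2.2.1 X₁ X₂ hu hd h1 h2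
        exact ⟨e, ⟨he.1, hes⟩, hes, h3, h4⟩
      · intro Z hCZ hZ _
        exact Set.Subset.antisymm (fun x hx => ((hZ hx).2 : x ∈ C)) hCZ
    obtain ⟨Y, hY, hsub⟩ := h2 b trivial C hCC'
    have hcar : (τ.removed B' X').carrier = C := by
      rw [removed_carrier]
      ext x
      simp only [Set.mem_diff, Set.mem_iUnion, hB', Set.mem_univ, exists_prop,
        true_and, ← τ.union]
      constructor
      · rintro ⟨⟨c, hc⟩, hn⟩
        by_cases h : c = b
        · rw [h] at hc
          by_contra hxC
          exact hn ⟨b, hXb ▸ ⟨hc, hxC⟩⟩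
        · exact absurd ⟨c, (hXc c h).symm ▸ hc⟩ hn
      · intro hx
        refine ⟨⟨b, hCcb hx⟩, ?_⟩
        rintro ⟨c, hc⟩
        by_cases h : c = b
        · rw [h, hXb] at hc
          exact hc.2 hx
        · rw [hXc c h] at hc
          exact (τ.disj h).ne_of_mem hc (hCcb hx) rfl
    have hYeq : Y = C := Set.Subset.antisymm (hcar ▸ hY.2.1) hsub
    exact hYeq ▸ removed_conn τ B' X' hY.2.2.1
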